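/- arXiv:2505.00440 — 4 statements merged into one kernel-verified Lean document; each statement's English description precedes it below -/
import Mathlib

section
/- For d ∈ ℕ and M ≥ 2, the (d+1)-dimensional hyperbolic cross decomposes as |A_{d+1}(M)| = |A_d(M)| + 2 ∑_{k=1}^{⌊M⌋} |A_d(M/k)|. -/
/-- The unweighted hyperbolic cross `A_d(M)`. -/
def hyperbolicCross (d : ℕ) (M : ℝ) : Set (Fin d → ℤ) :=
  {h | ((∏ j ∈ Finset.univ.filter (fun j => h j ≠ 0), |h j| : ℤ) : ℝ) ≤ M}

namespace HCAux

/-- The weight as a product over all coordinates. -/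
def w {d : ℕ} (h : Fin d → ℤ) : ℤ := ∏ j, (if h j ≠ 0 then |h j| else 1)

lemma one_le_f (x : ℤ) : 1 ≤ if x ≠ 0 then |x| else 1 := by
  by_cases hx : x = 0
  · simp [hx]
  · simpa [hx] using Int.one_le_abs hx

lemma one_le_prodf {d : ℕ} (h : Fin d → ℤ) (s : Finset (Fin d)) :
    1 ≤ ∏ j ∈ s, (if h j ≠ 0 then |h j| else 1) := by
  calc (1 : ℤ) = ∏ _j ∈ s, 1 := by simp
    _ ≤ _ := Finset.prod_le_prod (by simp) (fun j _ => one_le_f _)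

lemma one_le_w {d : ℕ} (h : Fin d → ℤ) : 1 ≤ w h := one_le_prodf h _

lemma mem_iff {d : ℕ} {M : ℝ} {h : Fin d → ℤ} :
    h ∈ hyperbolicCross d M ↔ ((w h : ℤ) : ℝ) ≤ M := by
  rw [hyperbolicCross, Set.mem_setOf_eq, w, Finset.prod_filter]

lemma abs_le_w {d : ℕ} (h : Fin d → ℤ) (j : Fin d) : |h j| ≤ w h := by
  rw [w, ← Finset.mul_prod_erase _ _ (Finset.mem_univ j)]
  have h1 : |h j| ≤ (if h j ≠ 0 then |h j| else 1) := by
    by_cases hj : h j = 0 <;> simp [hj]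
  exact le_trans h1 (le_mul_of_one_le_right
    (le_trans (abs_nonneg _) h1) (one_le_prodf h _))

lemma finite (d : ℕ) (M : ℝ) : (hyperbolicCross d M).Finite := by
  refine Set.Finite.subset (Set.Finite.pi
    (fun _ : Fin d => Set.finite_Icc (-⌊M⌋) ⌊M⌋)) ?_
  intro h hh
  rw [mem_iff] at hh
  rw [Set.mem_pi]
  intro j _
  rw [Set.mem_Icc, ← abs_le, Int.le_floor]
  calc ((|h j| : ℤ) : ℝ) ≤ ((w h : ℤ) : ℝ) := by exact_mod_cast abs_le_w h j
    _ ≤ M := hh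

lemma w_cons {d : ℕ} (m : ℤ) (g : Fin d → ℤ) :
    w (Fin.cons m g) = (if m ≠ 0 then |m| else 1) * w g := by
  simp [w, Fin.prod_univ_succ]

lemma cons_mem_iff {d : ℕ} {M : ℝ} (m : ℤ) (g : Fin d → ℤ) :
    Fin.cons m g ∈ hyperbolicCross (d + 1) M ↔
      g ∈ hyperbolicCross d (M / (if m = 0 then 1 else (|m| : ℝ))) := by
  rw [mem_iff, mem_iff, w_cons]
  rcases eq_or_ne m 0 with hm | hm
  · simp [hm]
  · have hpos : (0 : ℝ) < |(m : ℝ)| := abs_pos.mpr (by exact_mod_cast hm)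
    rw [if_neg hm, if_pos hm, le_div_iff₀ hpos]
    push_cast
    rw [mul_comm]

/-- Fibers over the value of the first coordinate. -/
noncomputable def fiberEquiv (d : ℕ) (M : ℝ) (m : ℤ) :
    {h : Fin (d + 1) → ℤ // h ∈ hyperbolicCross (d + 1) M ∧ h 0 = m} ≃
      hyperbolicCross d (M / (if m = 0 then 1 else (|m| : ℝ))) where
  toFun x := ⟨Fin.tail x.1, by
    have := x.2.1
    rw [← Fin.cons_self_tail x.1, x.2.2, cons_mem_iff] at this
    exact this⟩
  invFun y := ⟨Fin.cons m y.1, (cons_mem_iff m y.1).mpr y.2, Fin.cons_zero _ _⟩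
  left_inv x := by
    obtain ⟨h, hh, h0⟩ := x
    subst h0
    exact Subtype.ext (Fin.cons_self_tail h)
  right_inv y := by
    apply Subtype.ext
    simp

end HCAux

open HCAux in
/-- The decomposition `|A_{d+1}(M)| = |A_d(M)| + 2 ∑_{k=1}^{⌊M⌋} |A_d(M/k)|`
for `M ≥ 2`, splitting according to the last coordinate. -/
theorem hyperbolicCross_card_succ (d : ℕ) (M : ℝ) (hM : 2 ≤ M) :
    Nat.card (hyperbolicCross (d + 1) M)
      = Nat.card (hyperbolicCross d M)
        + 2 * ∑ k ∈ Finset.Icc 1 ⌊M⌋₊, Nat.card (hyperbolicCross d (M / k)) := by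
  have hM0 : (0 : ℝ) ≤ M := by linarith
  set a : ℤ := ⌊M⌋ with ha
  have ha0 : 0 ≤ a := Int.floor_nonneg.mpr hM0
  have hcast : (⌊M⌋₊ : ℤ) = a := Int.natCast_floor_eq_floor hM0
  classical
  set S : Finset (Fin (d + 1) → ℤ) := (finite (d + 1) M).toFinset with hS
  set F : ℤ → ℕ := fun m =>
    Nat.card (hyperbolicCross d (M / (if m = 0 then 1 else (|m| : ℝ)))) with hF
  have h1 : Nat.card (hyperbolicCross (d + 1) M) = S.card := by
    rw [hS, Nat.card_coe_set_eq, Set.ncard_eq_toFinset_card _ (finite (d + 1) M)]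
  have hmem : ∀ h ∈ S, h 0 ∈ Finset.Icc (-a) a := by
    intro h hh
    rw [hS, Set.Finite.mem_toFinset, mem_iff] at hh
    rw [Finset.mem_Icc, ← abs_le, ha, Int.le_floor]
    calc ((|h 0| : ℤ) : ℝ) ≤ ((w h : ℤ) : ℝ) := by exact_mod_cast abs_le_w h 0
      _ ≤ M := hh
  have h2 : S.card = ∑ m ∈ Finset.Icc (-a) a, F m := by
    rw [Finset.card_eq_sum_card_fiberwise hmem]
    refine Finset.sum_congr rfl fun m _ => ?_
    have heq : (Finset.filter (fun h => h 0 = m) S).card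
        = Nat.card {h : Fin (d + 1) → ℤ // h ∈ hyperbolicCross (d + 1) M ∧ h 0 = m} := by
      rw [← Nat.card_eq_finsetCard]
      exact Nat.card_congr (Equiv.subtypeEquivRight fun h => by
        simp [hS, Set.Finite.mem_toFinset])
    rw [heq, hF]
    exact Nat.card_congr (fiberEquiv d M m)
  have hsplit : Finset.Icc (-a) a = (Finset.Icc 1 a).image (fun m => -m)
      ∪ insert 0 (Finset.Icc 1 a) := by
    ext m
    simp only [Finset.mem_union, Finset.mem_image, Finset.mem_insert, Finset.mem_Icc]
    constructor
    · rintro ⟨hm1, hm2⟩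
      rcases lt_trichotomy m 0 with h | h | h
      · exact Or.inl ⟨-m, ⟨by omega, by omega⟩, by omega⟩
      · exact Or.inr (Or.inl h)
      · exact Or.inr (Or.inr ⟨h, hm2⟩)
    · rintro (⟨k, ⟨hk1, hk2⟩, rfl⟩ | rfl | ⟨hm1, hm2⟩) <;> omega
  have hdisj : Disjoint ((Finset.Icc 1 a).image (fun m => -m))
      (insert 0 (Finset.Icc 1 a)) := by
    rw [Finset.disjoint_left]
    intro m hm hm'
    simp only [Finset.mem_image, Finset.mem_Icc] at hm
    simp only [Finset.mem_insert, Finset.mem_Icc] at hm'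
    omega
  have h3 : ∑ m ∈ Finset.Icc (-a) a, F m
      = F 0 + 2 * ∑ m ∈ Finset.Icc 1 a, F m := by
    rw [hsplit, Finset.sum_union hdisj,
      Finset.sum_image (fun x _ y _ h => by omega),
      Finset.sum_insert (by simp)]
    have heven : ∀ m ∈ Finset.Icc (1:ℤ) a, F (-m) = F m := by
      intro m hm
      rw [Finset.mem_Icc] at hm
      simp only [hF]
      rw [if_neg (by omega : -m ≠ 0), if_neg (by omega : m ≠ 0)]
      push_cast
      rw [abs_neg]
    rw [Finset.sum_congr rfl heven]
    ring
  have h4 : F 0 = Nat.card (hyperbolicCross d M) := by simp [hF]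
  have himg : (Finset.Icc 1 ⌊M⌋₊).image (fun k : ℕ => (k : ℤ))
      = Finset.Icc (1:ℤ) a := by
    ext m
    simp only [Finset.mem_image, Finset.mem_Icc]
    constructor
    · rintro ⟨k, ⟨hk1, hk2⟩, rfl⟩; omega
    · intro ⟨hm1, hm2⟩
      exact ⟨m.toNat, by omega, by omega⟩
  have h5 : ∑ m ∈ Finset.Icc (1:ℤ) a, F m
      = ∑ k ∈ Finset.Icc 1 ⌊M⌋₊, Nat.card (hyperbolicCross d (M / k)) := by
    rw [← himg, Finset.sum_image (fun x _ y _ h => by exact_mod_cast h)]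
    refine Finset.sum_congr rfl fun k hk => ?_
    rw [Finset.mem_Icc] at hk
    have hk0 : ((k : ℤ)) ≠ 0 := by omega
    simp only [hF, if_neg hk0]
    congr 2
    push_cast
    rw [abs_of_nonneg (by positivity)]
  rw [h1, h2, h3, h4, h5]
end

section
/- Let α > 1/2, d ∈ ℕ, and weights γ_u ∈ (0,1] for each u ⊆ {1,…,d}. Define r_{α,γ}(h) := γ_{supp(h)}^{-1} ∏_{j ∈ supp(h)} |h_j|^α for h ∈ ℤ^d. Order ℤ^d as h_1, h_2, … so that r_{α,γ}(h_i) is non-decreasing in i. Then there exists a constant C (depending on d, α, γ) such that for all sufficiently large i, r_{α,γ}(h_i) ≥ C · i^α / (log i)^{α(d-1)}; equivalently σ_i := r_{α,γ}(h_i)^{-1} ≲ i^{-α} (log i)^{α(d-1)}. -/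
open Finset

/-- The ambient finite set of lattice points supported on `s` with
hyperbolic-cross product at most `m`. -/
noncomputable def Bset (d : ℕ) (s : Finset (Fin d)) (m : ℕ) : Finset (Fin d → ℤ) :=
  (Fintype.piFinset fun _ => Finset.Icc (-(m : ℤ)) m).filter
    fun g => (∀ j, j ∉ s → g j = 0) ∧ ∏ j ∈ s, max (g j).natAbs 1 ≤ m

lemma mem_Bset {d : ℕ} {s : Finset (Fin d)} {m : ℕ} {g : Fin d → ℤ} :
    g ∈ Bset d s m ↔ (∀ j, j ∉ s → g j = 0) ∧ ∏ j ∈ s, max (g j).natAbs 1 ≤ m := by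
  constructor
  · intro hg
    exact (Finset.mem_filter.mp hg).2
  · intro hg
    refine Finset.mem_filter.mpr ⟨Fintype.mem_piFinset.mpr fun j => ?_, hg⟩
    rcases Decidable.em (j ∈ s) with hj | hj
    · have h1 : max (g j).natAbs 1 ≤ m := by
        refine le_trans ?_ hg.2
        exact Finset.single_le_prod' (f := fun j => max (g j).natAbs 1)
          (fun i _ => le_max_right _ _) hj
      have : (g j).natAbs ≤ m := le_trans (le_max_left _ _) h1
      rw [Finset.mem_Icc]
      omega
    · rw [hg.1 j hj, Finset.mem_Icc]
      omega

lemma sum_natAbs_le (m : ℕ) (f : ℕ → ℝ) (hf : ∀ k, 0 ≤ f k) :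
    ∑ t ∈ Finset.Icc (-(m : ℤ)) m, f t.natAbs ≤ 2 * ∑ k ∈ Finset.range (m + 1), f k := by
  induction m with
  | zero =>
    simp only [Nat.cast_zero, neg_zero, Finset.Icc_self, Finset.sum_singleton,
      Int.natAbs_zero, Finset.sum_range_succ, Finset.range_zero, Finset.sum_empty, zero_add]
    nlinarith [hf 0]
  | succ m ih =>
    have hset : Finset.Icc (-((m : ℕ) + 1 : ℤ)) ((m : ℕ) + 1 : ℤ) =
        insert (-((m : ℕ) + 1 : ℤ)) (insert (((m : ℕ) + 1 : ℤ)) (Finset.Icc (-(m : ℤ)) m)) := by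
      ext t
      simp only [Finset.mem_Icc, Finset.mem_insert]
      omega
    have h1 : (-((m : ℕ) + 1 : ℤ)) ∉ insert (((m : ℕ) + 1 : ℤ)) (Finset.Icc (-(m : ℤ)) m) := by
      simp only [Finset.mem_insert, Finset.mem_Icc]
      omega
    have h2 : (((m : ℕ) + 1 : ℤ)) ∉ Finset.Icc (-(m : ℤ)) m := by
      simp only [Finset.mem_Icc]; omega
    have hcast : ((m + 1 : ℕ) : ℤ) = ((m : ℕ) : ℤ) + 1 := by push_cast; ring
    rw [hcast]
    rw [hset, Finset.sum_insert h1, Finset.sum_insert h2]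
    have hn1 : (-((m : ℕ) + 1 : ℤ)).natAbs = m + 1 := by omega
    have hn2 : (((m : ℕ) + 1 : ℤ)).natAbs = m + 1 := by omega
    rw [hn1, hn2, Finset.sum_range_succ (n := m + 1)]
    linarith [ih]

lemma sum_inv_max_le (m : ℕ) (hm : 1 ≤ m) :
    ∑ k ∈ Finset.range (m + 1), 1 / ((max k 1 : ℕ) : ℝ) ≤ 2 * (1 + Real.log m) := by
  have hset : Finset.range (m + 1) = insert 0 (Finset.Icc 1 m) := by
    ext k; simp only [Finset.mem_range, Finset.mem_insert, Finset.mem_Icc]; omega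
  have h0 : (0 : ℕ) ∉ Finset.Icc 1 m := by simp
  rw [hset, Finset.sum_insert h0]
  have hsum : ∑ k ∈ Finset.Icc 1 m, 1 / ((max k 1 : ℕ) : ℝ)
      = ∑ k ∈ Finset.Icc 1 m, ((k : ℝ))⁻¹ := by
    refine Finset.sum_congr rfl fun k hk => ?_
    have : max k 1 = k := max_eq_left (Finset.mem_Icc.mp hk).1
    rw [this, one_div]
  have hharm : ∑ k ∈ Finset.Icc 1 m, ((k : ℝ))⁻¹ ≤ 1 + Real.log m := by
    have h1 := harmonic_le_one_add_log m
    rw [harmonic_eq_sum_Icc] at h1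
    push_cast at h1
    exact h1
  have hlog : 0 ≤ Real.log m := Real.log_nonneg (by exact_mod_cast hm)
  rw [hsum]
  norm_num
  linarith

lemma Bset_empty_card_le (d m : ℕ) : (Bset d (∅ : Finset (Fin d)) m).card ≤ 1 :=
  Finset.card_le_one.mpr fun x hx y hy => funext fun j => by
    rw [(mem_Bset.mp hx).1 j (by simp), (mem_Bset.mp hy).1 j (by simp)]

lemma Bset_card_le (d : ℕ) (s : Finset (Fin d)) : ∀ m : ℕ, 1 ≤ m →
    ((Bset d s m).card : ℝ) ≤ 9 ^ s.card * m * (1 + Real.log m) ^ (s.card - 1) := by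
  induction s using Finset.induction_on with
  | empty =>
    intro m hm
    simp only [Finset.card_empty, pow_zero, one_mul]
    have := Bset_empty_card_le d m
    have hm' : (1 : ℝ) ≤ m := by exact_mod_cast hm
    calc ((Bset d (∅ : Finset (Fin d)) m).card : ℝ) ≤ 1 := by exact_mod_cast this
      _ ≤ m * (1 + Real.log m) ^ (0 - 1) := by
          simp only [Nat.zero_sub, pow_zero, mul_one]; exact hm'
  | @insert a s ha ih =>
    intro m hm
    -- the covering by values of the `a`-th coordinate
    have hsub : Bset d (insert a s) m ⊆ (Finset.Icc (-(m : ℤ)) m).biUnion fun t =>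
        (Bset d s (m / max t.natAbs 1)).image fun g => Function.update g a t := by
      intro f hf
      obtain ⟨hsupp, hprod⟩ := mem_Bset.mp hf
      rw [Finset.prod_insert ha] at hprod
      have hpos : 0 < ∏ j ∈ s, max (f j).natAbs 1 :=
        Finset.prod_pos fun j _ => by omega
      have hta : max (f a).natAbs 1 ≤ m :=
        le_trans (Nat.le_mul_of_pos_right _ hpos) hprod
      refine Finset.mem_biUnion.mpr ⟨f a, ?_, ?_⟩
      · rw [Finset.mem_Icc]; omega
      refine Finset.mem_image.mpr ⟨Function.update f a 0, ?_, ?_⟩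
      · refine mem_Bset.mpr ⟨?_, ?_⟩
        · intro j hj
          rcases eq_or_ne j a with rfl | hja
          · simp
          · rw [Function.update_of_ne hja]
            exact hsupp j (by simp [hja, hj])
        · have heq : ∏ j ∈ s, max ((Function.update f a 0) j).natAbs 1
              = ∏ j ∈ s, max (f j).natAbs 1 :=
            Finset.prod_congr rfl fun j hj => by
              rw [Function.update_of_ne (ne_of_mem_of_not_mem hj ha)]
          rw [heq, Nat.le_div_iff_mul_le (by omega : 0 < max (f a).natAbs 1)]
          rw [mul_comm]; exact hprod
      · rw [Function.update_idem, Function.update_eq_self]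
    have hcard : (Bset d (insert a s) m).card ≤
        ∑ t ∈ Finset.Icc (-(m : ℤ)) m, (Bset d s (m / max t.natAbs 1)).card :=
      le_trans (Finset.card_le_card hsub)
        (le_trans Finset.card_biUnion_le
          (Finset.sum_le_sum fun t _ => Finset.card_image_le))
    have hcardR : ((Bset d (insert a s) m).card : ℝ) ≤
        ∑ t ∈ Finset.Icc (-(m : ℤ)) m, ((Bset d s (m / max t.natAbs 1)).card : ℝ) := by
      exact_mod_cast hcard
    rw [Finset.card_insert_of_notMem ha]
    set c := s.card with hc
    set L := 1 + Real.log m with hL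
    have hm' : (1 : ℝ) ≤ m := by exact_mod_cast hm
    have hL1 : 1 ≤ L := by
      have : 0 ≤ Real.log m := Real.log_nonneg hm'
      simp [hL]; linarith
    have hIcc : ∀ t ∈ Finset.Icc (-(m : ℤ)) m, 1 ≤ m / max t.natAbs 1 ∧ max t.natAbs 1 ≤ m := by
      intro t ht
      rw [Finset.mem_Icc] at ht
      have h1 : max t.natAbs 1 ≤ m := by omega
      exact ⟨(Nat.one_le_div_iff (by omega)).mpr h1, h1⟩
    rcases Nat.eq_zero_or_pos c with hc0 | hc1
    -- case s = ∅ : direct count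
    · have hone : ∀ t ∈ Finset.Icc (-(m : ℤ)) m, (Bset d s (m / max t.natAbs 1)).card ≤ 1 := by
        intro t _
        have hs : s = ∅ := Finset.card_eq_zero.mp hc0
        rw [hs]; exact Bset_empty_card_le d _
      have h2 : (Bset d (insert a s) m).card ≤ (Finset.Icc (-(m : ℤ)) m).card :=
        le_trans hcard (by
          calc ∑ t ∈ Finset.Icc (-(m : ℤ)) m, (Bset d s (m / max t.natAbs 1)).card
              ≤ ∑ _t ∈ Finset.Icc (-(m : ℤ)) m, 1 := Finset.sum_le_sum hone
            _ = (Finset.Icc (-(m : ℤ)) m).card := by simp)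
      have h3 : (Finset.Icc (-(m : ℤ)) m).card = 2 * m + 1 := by
        rw [Int.card_Icc]; omega
      have h4 : ((Bset d (insert a s) m).card : ℝ) ≤ 2 * m + 1 := by
        rw [h3] at h2; exact_mod_cast h2
      rw [hc0]
      simp only [zero_add, pow_one, Nat.sub_self, pow_zero, mul_one]
      linarith
    -- case s ≠ ∅ : use the induction hypothesis
    · have key : ∀ t ∈ Finset.Icc (-(m : ℤ)) m,
          ((Bset d s (m / max t.natAbs 1)).card : ℝ) ≤
            (9 ^ c * L ^ (c - 1) * m) * (1 / ((max t.natAbs 1 : ℕ) : ℝ)) := by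
        intro t ht
        obtain ⟨hdiv1, hkm⟩ := hIcc t ht
        have hkpos : (0 : ℝ) < ((max t.natAbs 1 : ℕ) : ℝ) := by
          have : (1 : ℕ) ≤ max t.natAbs 1 := le_max_right _ _
          exact_mod_cast lt_of_lt_of_le zero_lt_one (by exact_mod_cast this)
        have hIH := ih (m / max t.natAbs 1) hdiv1
        have hdle : ((m / max t.natAbs 1 : ℕ) : ℝ) ≤ (m : ℝ) / ((max t.natAbs 1 : ℕ) : ℝ) :=
          Nat.cast_div_le
        have hlogle : 1 + Real.log ((m / max t.natAbs 1 : ℕ) : ℝ) ≤ L := by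
          rw [hL]
          have : ((m / max t.natAbs 1 : ℕ) : ℝ) ≤ (m : ℝ) := by
            exact_mod_cast Nat.div_le_self m (max t.natAbs 1)
          have hlm := Real.log_le_log (by exact_mod_cast hdiv1) this
          linarith
        have hbase : (0 : ℝ) ≤ 1 + Real.log ((m / max t.natAbs 1 : ℕ) : ℝ) := by
          have : (1 : ℝ) ≤ ((m / max t.natAbs 1 : ℕ) : ℝ) := by exact_mod_cast hdiv1
          have := Real.log_nonneg this
          linarith
        calc ((Bset d s (m / max t.natAbs 1)).card : ℝ)
            ≤ 9 ^ c * ((m / max t.natAbs 1 : ℕ) : ℝ) *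
              (1 + Real.log ((m / max t.natAbs 1 : ℕ) : ℝ)) ^ (c - 1) := hIH
          _ ≤ 9 ^ c * ((m : ℝ) / ((max t.natAbs 1 : ℕ) : ℝ)) * L ^ (c - 1) := by
              gcongr
          _ = (9 ^ c * L ^ (c - 1) * m) * (1 / ((max t.natAbs 1 : ℕ) : ℝ)) := by
              field_simp
      have hsum4L : ∑ t ∈ Finset.Icc (-(m : ℤ)) m, 1 / ((max t.natAbs 1 : ℕ) : ℝ) ≤ 4 * L := by
        have h1 := sum_natAbs_le m (fun k => 1 / ((max k 1 : ℕ) : ℝ)) (fun k => by positivity)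
        have h2 := sum_inv_max_le m hm
        calc ∑ t ∈ Finset.Icc (-(m : ℤ)) m, 1 / ((max t.natAbs 1 : ℕ) : ℝ)
            ≤ 2 * ∑ k ∈ Finset.range (m + 1), 1 / ((max k 1 : ℕ) : ℝ) := h1
          _ ≤ 2 * (2 * (1 + Real.log m)) := by linarith
          _ = 4 * L := by rw [hL]; ring
      have hnn : (0 : ℝ) ≤ 9 ^ c * L ^ (c - 1) * m := by positivity
      calc ((Bset d (insert a s) m).card : ℝ)
          ≤ ∑ t ∈ Finset.Icc (-(m : ℤ)) m, ((Bset d s (m / max t.natAbs 1)).card : ℝ) := hcardR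
        _ ≤ ∑ t ∈ Finset.Icc (-(m : ℤ)) m,
            (9 ^ c * L ^ (c - 1) * m) * (1 / ((max t.natAbs 1 : ℕ) : ℝ)) :=
            Finset.sum_le_sum key
        _ = (9 ^ c * L ^ (c - 1) * m) *
            ∑ t ∈ Finset.Icc (-(m : ℤ)) m, 1 / ((max t.natAbs 1 : ℕ) : ℝ) := by
            rw [Finset.mul_sum]
        _ ≤ (9 ^ c * L ^ (c - 1) * m) * (4 * L) := by
            apply mul_le_mul_of_nonneg_left hsum4L hnn
        _ ≤ 9 ^ (c + 1) * m * L ^ ((c + 1) - 1) := by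
            have hLpow : L ^ (c - 1) * L = L ^ c := by
              have h : c - 1 + 1 = c := Nat.succ_pred_eq_of_pos hc1
              calc L ^ (c - 1) * L = L ^ (c - 1 + 1) := (pow_succ _ _).symm
                _ = L ^ c := by rw [h]
            have : 9 ^ c * L ^ (c - 1) * m * (4 * L) = 4 * (9 ^ c * m * (L ^ (c - 1) * L)) := by
              ring
            rw [this, hLpow]
            have h9 : (4 : ℝ) * (9 ^ c * m * L ^ c) ≤ 9 * (9 ^ c * m * L ^ c) := by
              have : (0:ℝ) ≤ 9 ^ c * m * L ^ c := by positivity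
              nlinarith
            calc (4:ℝ) * (9 ^ c * m * L ^ c) ≤ 9 * (9 ^ c * m * L ^ c) := h9
              _ = 9 ^ (c + 1) * m * L ^ ((c + 1) - 1) := by
                  simp only [Nat.add_sub_cancel]; ring

/-- The hyperbolic-cross weight of a lattice point. -/
def Pz (d : ℕ) (g : Fin d → ℤ) : ℕ := ∏ j, max (g j).natAbs 1

lemma one_le_Pz (d : ℕ) (g : Fin d → ℤ) : 1 ≤ Pz d g :=
  Finset.one_le_prod' fun j _ => le_max_right _ _

/-- Polynomial decay of the ordered Korobov sequence: if `ℤ^d` is ordered so that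
`r_{α,γ}(h_i)` is non-decreasing, then `r_{α,γ}(h_i) ≥ C i^α / (log i)^{α(d-1)}`
for all sufficiently large `i`; equivalently `σ_i ≲ i^{-α} (log i)^{α(d-1)}`. -/
theorem korobov_sigma_decay (d : ℕ) (α : ℝ) (hα : 1 / 2 < α)
    (γ : Finset (Fin d) → ℝ) (hγ : ∀ u, 0 < γ u ∧ γ u ≤ 1)
    (r : (Fin d → ℤ) → ℝ)
    (hr : ∀ h : Fin d → ℤ,
      r h = (γ (Finset.univ.filter fun j => h j ≠ 0))⁻¹ *
        ∏ j ∈ Finset.univ.filter (fun j => h j ≠ 0), ((|h j| : ℤ) : ℝ) ^ α)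
    (h : ℕ → (Fin d → ℤ)) (hbij : Function.Bijective h)
    (hmono : Monotone fun i => r (h i)) :
    ∃ C : ℝ, 0 < C ∧ ∃ i₀ : ℕ, ∀ i : ℕ, i₀ ≤ i →
      C * (i : ℝ) ^ α / Real.log i ^ (α * ((d : ℝ) - 1)) ≤ r (h i) := by
  have hα0 : (0 : ℝ) < α := lt_trans (by norm_num) hα
  rcases Nat.eq_zero_or_pos d with hd0 | hd
  · exfalso
    subst hd0
    have h01 : h 0 = h 1 := Subsingleton.elim _ _
    have := hbij.1 h01
    omega
  -- the key lower bound `r g ≥ (Pz g)^α`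
  have hrlow : ∀ g, ((Pz d g : ℝ)) ^ α ≤ r g := by
    intro g
    set u := Finset.univ.filter (fun j => g j ≠ 0) with hu
    have h1 : ∏ j ∈ u, max (g j).natAbs 1 = Pz d g :=
      Finset.prod_subset (Finset.subset_univ u) (fun j _ hj => by
        have hgj : g j = 0 := by simpa [hu] using hj
        simp [hgj])
    have h2 : ∏ j ∈ u, ((g j).natAbs : ℝ) = (Pz d g : ℝ) := by
      rw [← h1, Nat.cast_prod]
      refine Finset.prod_congr rfl fun j hj => ?_
      have hgj : g j ≠ 0 := by simpa [hu] using (Finset.mem_filter.mp hj).2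
      have hmax : max (g j).natAbs 1 = (g j).natAbs := max_eq_left (by omega)
      rw [hmax]
    have h3 : ∏ j ∈ u, ((|g j| : ℤ) : ℝ) = (Pz d g : ℝ) := by
      rw [← h2]
      refine Finset.prod_congr rfl fun j _ => ?_
      push_cast [Nat.cast_natAbs]
      ring
    have h4 : ∏ j ∈ u, ((|g j| : ℤ) : ℝ) ^ α = ((Pz d g : ℝ)) ^ α := by
      rw [Real.finset_prod_rpow u _ (fun j _ => by positivity) α, h3]
    rw [hr g, ← hu, h4]
    have hγinv : 1 ≤ (γ u)⁻¹ := one_le_inv_iff₀.mpr ⟨(hγ u).1, (hγ u).2⟩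
    exact le_mul_of_one_le_left (Real.rpow_nonneg (Nat.cast_nonneg _) α) hγinv
  -- constants
  have hB0 : (0 : ℝ) < 9 ^ d * 2 ^ (d - 1) := by positivity
  set B : ℝ := 9 ^ d * 2 ^ (d - 1) with hBdef
  refine ⟨min 1 (B ^ (-α)), lt_min one_pos (Real.rpow_pos_of_pos hB0 _), 3, ?_⟩
  intro i hi
  set C : ℝ := min 1 (B ^ (-α)) with hCdef
  have hC0 : 0 < C := lt_min one_pos (Real.rpow_pos_of_pos hB0 _)
  have hCle1 : C ≤ 1 := min_le_left _ _
  have hi3 : (3 : ℝ) ≤ (i : ℝ) := by exact_mod_cast hi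
  have hi0 : (0 : ℝ) < (i : ℝ) := by linarith
  set T : ℝ := Real.log i with hTdef
  have hT1 : 1 ≤ T := by
    have hexp : Real.exp 1 ≤ 3 := le_of_lt (lt_of_lt_of_le Real.exp_one_lt_d9 (by norm_num))
    calc (1 : ℝ) = Real.log (Real.exp 1) := (Real.log_exp 1).symm
      _ ≤ Real.log i := Real.log_le_log (Real.exp_pos 1) (le_trans hexp hi3)
  have hTpos : 0 < T := lt_of_lt_of_le one_pos hT1
  set D : ℝ := T ^ (α * ((d : ℝ) - 1)) with hDdef
  have hd1R : (1 : ℝ) ≤ (d : ℝ) := by exact_mod_cast hd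
  have hexp0 : 0 ≤ α * ((d : ℝ) - 1) := mul_nonneg hα0.le (by linarith)
  have hD1 : 1 ≤ D := Real.one_le_rpow hT1 hexp0
  have hD0 : 0 < D := lt_of_lt_of_le one_pos hD1
  -- set-up of the counting argument
  have hR1 : 1 ≤ r (h i) := by
    refine le_trans ?_ (hrlow (h i))
    calc (1 : ℝ) = 1 ^ α := (Real.one_rpow α).symm
      _ ≤ ((Pz d (h i) : ℝ)) ^ α :=
        Real.rpow_le_rpow zero_le_one (by exact_mod_cast one_le_Pz d (h i)) hα0.le
  have hR0 : (0 : ℝ) ≤ r (h i) := by linarith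
  set s : ℝ := (r (h i)) ^ (1 / α) with hsdef
  have hs1 : 1 ≤ s := Real.one_le_rpow hR1 (by positivity)
  have hsR : s ^ α = r (h i) := by
    rw [hsdef, ← Real.rpow_mul hR0, one_div_mul_cancel hα0.ne', Real.rpow_one]
  set n : ℕ := ⌊s⌋₊ with hndef
  have hn1 : 1 ≤ n := Nat.le_floor (by exact_mod_cast hs1)
  have hns : (n : ℝ) ≤ s := Nat.floor_le (by linarith)
  have hmem : ∀ k, k ≤ i → h k ∈ Bset d Finset.univ n := by
    intro k hk
    refine mem_Bset.mpr ⟨fun j hj => absurd (Finset.mem_univ j) hj, ?_⟩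
    have hk1 : ((Pz d (h k) : ℝ)) ^ α ≤ r (h i) := le_trans (hrlow (h k)) (hmono hk)
    have hk2 : (Pz d (h k) : ℝ) ≤ s := by
      have h5 := Real.rpow_le_rpow (Real.rpow_nonneg (Nat.cast_nonneg _) α) hk1
        (by positivity : (0 : ℝ) ≤ 1 / α)
      rwa [← Real.rpow_mul (Nat.cast_nonneg _), mul_one_div_cancel hα0.ne',
        Real.rpow_one] at h5
    exact Nat.le_floor hk2
  have hsubset : (Finset.range (i + 1)).image h ⊆ Bset d Finset.univ n := by
    intro x hx
    obtain ⟨k, hk, rfl⟩ := Finset.mem_image.mp hx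
    exact hmem k (Nat.lt_succ_iff.mp (Finset.mem_range.mp hk))
  have hcount : i + 1 ≤ (Bset d Finset.univ n).card := by
    have := Finset.card_le_card hsubset
    rwa [Finset.card_image_of_injective _ hbij.1, Finset.card_range] at this
  have hbound := Bset_card_le d Finset.univ n hn1
  rw [Finset.card_fin] at hbound
  have hlogn0 : 0 ≤ Real.log n := Real.log_nonneg (by exact_mod_cast hn1)
  have hchain : (i : ℝ) ≤ 9 ^ d * s * (1 + Real.log s) ^ (d - 1) := by
    have h1 : ((i + 1 : ℕ) : ℝ) ≤ 9 ^ d * n * (1 + Real.log n) ^ (d - 1) :=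
      le_trans (by exact_mod_cast hcount) hbound
    have h2 : (9 : ℝ) ^ d * n * (1 + Real.log n) ^ (d - 1) ≤
        9 ^ d * s * (1 + Real.log s) ^ (d - 1) := by
      have hll : Real.log ↑n ≤ Real.log s := Real.log_le_log (by exact_mod_cast hn1) hns
      gcongr
      all_goals linarith
    calc (i : ℝ) ≤ ((i + 1 : ℕ) : ℝ) := by push_cast; linarith
      _ ≤ 9 ^ d * n * (1 + Real.log n) ^ (d - 1) := h1
      _ ≤ _ := h2
  -- final inversion
  by_cases hsi : (i : ℝ) ≤ s
  · -- huge value: trivial since `C ≤ 1` and `D ≥ 1`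
    have h1 : (i : ℝ) ^ α ≤ r (h i) := by
      rw [← hsR]; exact Real.rpow_le_rpow (Nat.cast_nonneg i) hsi hα0.le
    have hipow : (0 : ℝ) ≤ (i : ℝ) ^ α := Real.rpow_nonneg (Nat.cast_nonneg i) α
    have h2 : C * (i : ℝ) ^ α / D ≤ (i : ℝ) ^ α := by
      rw [div_le_iff₀ hD0]
      nlinarith
    linarith
  · have hsi' : s ≤ (i : ℝ) := (not_le.mp hsi).le
    have hlogs : Real.log s ≤ T := by
      rw [hTdef]
      exact Real.log_le_log (lt_of_lt_of_le one_pos hs1) hsi'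
    have hnn : (0 : ℝ) ≤ 1 + Real.log s := by
      have := Real.log_nonneg hs1; linarith
    have h3 : (i : ℝ) ≤ 9 ^ d * s * (2 * T) ^ (d - 1) := by
      refine le_trans hchain ?_
      gcongr
      all_goals linarith
    have h4 : (i : ℝ) ≤ (B * T ^ (d - 1)) * s := by
      have heq : (9 : ℝ) ^ d * s * (2 * T) ^ (d - 1) = (B * T ^ (d - 1)) * s := by
        rw [mul_pow, hBdef]; ring
      linarith [heq ▸ h3]
    have hBT0 : (0 : ℝ) < B * T ^ (d - 1) := by positivity
    have h5 : (i : ℝ) / (B * T ^ (d - 1)) ≤ s := (div_le_iff₀ hBT0).mpr (by linarith)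
    have h6 : ((i : ℝ) / (B * T ^ (d - 1))) ^ α ≤ r (h i) := by
      rw [← hsR]; exact Real.rpow_le_rpow (by positivity) h5 hα0.le
    have h7 : ((i : ℝ) / (B * T ^ (d - 1))) ^ α = (i : ℝ) ^ α / (B ^ α * D) := by
      rw [Real.div_rpow (Nat.cast_nonneg i) (by positivity),
        Real.mul_rpow hB0.le (by positivity)]
      congr 1
      rw [← Real.rpow_natCast T (d - 1), ← Real.rpow_mul hTpos.le, hDdef]
      congr 1
      have hcast : ((d - 1 : ℕ) : ℝ) = (d : ℝ) - 1 := by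
        rw [Nat.cast_sub hd]; norm_num
      rw [hcast]; ring
    have hCB : C ≤ (B ^ α)⁻¹ := by
      rw [hCdef, ← Real.rpow_neg hB0.le]
      exact min_le_right _ _
    have hBα0 : (0 : ℝ) < B ^ α := Real.rpow_pos_of_pos hB0 α
    have hiα0 : (0 : ℝ) < (i : ℝ) ^ α := Real.rpow_pos_of_pos hi0 α
    calc C * (i : ℝ) ^ α / D ≤ (B ^ α)⁻¹ * (i : ℝ) ^ α / D := by gcongr
      _ = (i : ℝ) ^ α / (B ^ α * D) := by field_simp
      _ ≤ r (h i) := h7 ▸ h6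
end

section
/- Let α > 1/2, 1/2 < λ < α, d ∈ ℕ, and weights γ_u ∈ (0,1] for u ⊆ {1,…,d}, with r_{α,γ}(h) := γ_{supp(h)}^{-1} ∏_{j∈supp(h)} |h_j|^α. Then for every M > 0, the weighted hyperbolic cross A_{d,α,γ}(M) := { h ∈ ℤ^d : r_{α,γ}(h) ≤ M } satisfies |A_{d,α,γ}(M)| ≤ M^{1/λ} · ∑_{u ⊆ {1,…,d}} γ_u^{1/λ} (2ζ(α/λ))^{|u|}, where ζ is the Riemann zeta function. -/
open Finset


/-- Bound on the weighted hyperbolic cross: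
`|A_{d,α,γ}(M)| ≤ M^{1/λ} ∑_{u ⊆ {1,…,d}} γ_u^{1/λ} (2 ζ(α/λ))^{|u|}`
for `1/2 < λ < α`, where `ζ(s) = ∑_{m ≥ 1} m^{-s}` is the Riemann zeta function. -/
theorem weighted_hyperbolic_cross_bound (d : ℕ) (α lam : ℝ)
    (hα : 1 / 2 < α) (hlam1 : 1 / 2 < lam) (hlam2 : lam < α)
    (γ : Finset (Fin d) → ℝ) (hγ : ∀ u, 0 < γ u ∧ γ u ≤ 1)
    (r : (Fin d → ℤ) → ℝ)
    (hr : ∀ h : Fin d → ℤ,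
      r h = (γ (Finset.univ.filter fun j => h j ≠ 0))⁻¹ *
        ∏ j ∈ Finset.univ.filter (fun j => h j ≠ 0), ((|h j| : ℤ) : ℝ) ^ α)
    (M : ℝ) (hM : 0 < M) :
    (Nat.card {h : Fin d → ℤ | r h ≤ M} : ℝ)
      ≤ M ^ (1 / lam) * ∑ u : Finset (Fin d),
          γ u ^ (1 / lam) * (2 * ∑' m : ℕ, ((m : ℝ) + 1) ^ (-(α / lam))) ^ u.card := by
  classical
  have hlam0 : (0:ℝ) < lam := by linarith
  have hα0 : (0:ℝ) < α := by linarith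
  have hexp0 : (0:ℝ) ≤ 1 / lam := by positivity
  set β := α / lam with hβdef
  have hβ : 1 < β := (one_lt_div hlam0).2 hlam2
  have hβ0 : 0 < β := by linarith
  -- summability of the zeta-type series
  have hsum : Summable (fun m : ℕ => ((m : ℝ) + 1) ^ (-β)) := by
    have h1 : Summable (fun n : ℕ => (n : ℝ) ^ (-β)) :=
      Real.summable_nat_rpow.2 (by linarith)
    have h2 := (summable_nat_add_iff 1).2 h1
    refine h2.congr fun n => ?_
    push_cast
    ring_nf
  set Z := ∑' m : ℕ, ((m : ℝ) + 1) ^ (-β) with hZdef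
  have hterm0 : ∀ m : ℕ, (0:ℝ) ≤ ((m : ℝ) + 1) ^ (-β) :=
    fun m => Real.rpow_nonneg (by positivity) _
  have hZ0 : 0 ≤ Z := tsum_nonneg hterm0
  set w : ℤ → ℝ := fun n => ((|n| : ℤ) : ℝ) ^ (-β) with hwdef
  have hw0 : ∀ n, 0 ≤ w n := fun n => Real.rpow_nonneg (by positivity) _
  have hwzero : w 0 = 0 := by
    simp only [w, abs_zero, Int.cast_zero]
    exact Real.zero_rpow (neg_ne_zero.2 hβ0.ne')
  have hrange : ∀ K : ℕ, ∑ k ∈ Finset.range K, ((k:ℝ)+1) ^ (-β) ≤ Z :=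
    fun K => Summable.sum_le_tsum _ (fun m _ => hterm0 m) hsum
  -- the box
  set N : ℕ := ⌈M ^ (1/α)⌉₊ with hNdef
  set T : Finset ℤ := (Finset.range (N+1)).image (fun k : ℕ => (k:ℤ)) ∪
      (Finset.range (N+1)).image (fun k : ℕ => -(k:ℤ)) with hTdef
  have hTmem : ∀ n : ℤ, |n| ≤ (N:ℤ) → n ∈ T := by
    intro n hn
    rcases le_or_gt 0 n with h0 | h0
    · refine Finset.mem_union_left _ (Finset.mem_image.2 ⟨n.toNat, ?_, by
        simp [Int.toNat_of_nonneg h0]⟩)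
      refine Finset.mem_range.2 (Nat.lt_succ_of_le (Int.toNat_le.2 ?_))
      rwa [abs_of_nonneg h0] at hn
    · refine Finset.mem_union_right _ (Finset.mem_image.2 ⟨(-n).toNat, ?_, by
        simp [Int.toNat_of_nonneg (by linarith : (0:ℤ) ≤ -n)]⟩)
      refine Finset.mem_range.2 (Nat.lt_succ_of_le (Int.toNat_le.2 ?_))
      rw [abs_of_neg h0] at hn
      exact hn
  have h0T : (0:ℤ) ∈ T := hTmem 0 (by simp)
  -- sum of w over T
  have hnatsum : ∑ k ∈ Finset.range (N+1), w (k:ℤ) ≤ Z := by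
    rw [Finset.sum_range_succ']
    have e0 : w ((0:ℕ):ℤ) = 0 := by simpa using hwzero
    rw [e0, add_zero]
    calc ∑ k ∈ Finset.range N, w ((k+1 : ℕ):ℤ)
        = ∑ k ∈ Finset.range N, ((k:ℝ)+1) ^ (-β) := by
          refine Finset.sum_congr rfl fun k _ => ?_
          simp only [w]
          rw [Int.abs_natCast]
          push_cast
          ring_nf
      _ ≤ Z := hrange N
  have hTsum : ∑ n ∈ T, w n ≤ 2 * Z := by
    have hsub : (∑ n ∈ (Finset.range (N+1)).image (fun k : ℕ => (k:ℤ)) ∪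
          (Finset.range (N+1)).image (fun k : ℕ => -(k:ℤ)), w n) +
        (∑ n ∈ (Finset.range (N+1)).image (fun k : ℕ => (k:ℤ)) ∩
          (Finset.range (N+1)).image (fun k : ℕ => -(k:ℤ)), w n) =
        (∑ n ∈ (Finset.range (N+1)).image (fun k : ℕ => (k:ℤ)), w n) +
        (∑ n ∈ (Finset.range (N+1)).image (fun k : ℕ => -(k:ℤ)), w n) :=
      Finset.sum_union_inter
    have hinter : 0 ≤ ∑ n ∈ ((Finset.range (N+1)).image (fun k : ℕ => (k:ℤ))) ∩
        ((Finset.range (N+1)).image (fun k : ℕ => -(k:ℤ))), w n :=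
      Finset.sum_nonneg fun n _ => hw0 n
    have h1 : ∑ n ∈ (Finset.range (N+1)).image (fun k : ℕ => (k:ℤ)), w n ≤ Z := by
      rw [Finset.sum_image (fun a _ b _ h => by exact_mod_cast h)]
      exact hnatsum
    have h2 : ∑ n ∈ (Finset.range (N+1)).image (fun k : ℕ => -(k:ℤ)), w n ≤ Z := by
      rw [Finset.sum_image (fun a _ b _ h => by omega)]
      calc ∑ k ∈ Finset.range (N+1), w (-(k:ℤ))
          = ∑ k ∈ Finset.range (N+1), w (k:ℤ) := by
            refine Finset.sum_congr rfl fun k _ => ?_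
            simp [w, abs_neg]
        _ ≤ Z := hnatsum
    rw [hTdef]
    linarith
  have hST0 : 0 ≤ ∑ n ∈ T, w n := Finset.sum_nonneg fun n _ => hw0 n
  -- support
  set supp : (Fin d → ℤ) → Finset (Fin d) := fun h => Finset.univ.filter fun j => h j ≠ 0
    with hsuppdef
  have hrpos : ∀ h, 0 < r h := by
    intro h
    rw [hr]
    refine mul_pos (inv_pos.2 (hγ _).1) (Finset.prod_pos fun j hj => ?_)
    have hj0 : h j ≠ 0 := (Finset.mem_filter.1 hj).2
    refine Real.rpow_pos_of_pos ?_ _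
    exact_mod_cast abs_pos.2 hj0
  have hfac1 : ∀ (h : Fin d → ℤ) j, j ∈ supp h → (1:ℝ) ≤ ((|h j| : ℤ) : ℝ) ^ α := by
    intro h j hj
    have hj0 : h j ≠ 0 := (Finset.mem_filter.1 hj).2
    have h1 : (1:ℤ) ≤ |h j| := Int.one_le_abs hj0
    exact Real.one_le_rpow (by exact_mod_cast h1) hα0.le
  have hbox : ∀ h : Fin d → ℤ, r h ≤ M → ∀ j, h j ∈ T := by
    intro h hh j
    rcases eq_or_ne (h j) 0 with h0 | h0
    · rw [h0]; exact h0T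
    · have hjmem : j ∈ supp h := by simp [supp, h0]
      have hple : ((|h j| : ℤ) : ℝ) ^ α ≤ r h := by
        rw [hr]
        have hγ1 : (1:ℝ) ≤ (γ (supp h))⁻¹ := (one_le_inv₀ (hγ _).1).2 (hγ _).2
        have hprod1 : (1:ℝ) ≤ ∏ i ∈ (supp h).erase j, ((|h i| : ℤ) : ℝ) ^ α := by
          calc (1:ℝ) = ∏ _i ∈ (supp h).erase j, (1:ℝ) := by simp
            _ ≤ ∏ i ∈ (supp h).erase j, ((|h i| : ℤ) : ℝ) ^ α :=
              Finset.prod_le_prod (fun i _ => zero_le_one)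
                (fun i hi => hfac1 h i (Finset.mem_of_mem_erase hi))
        calc ((|h j| : ℤ) : ℝ) ^ α
            ≤ ((|h j| : ℤ) : ℝ) ^ α * ∏ i ∈ (supp h).erase j, ((|h i| : ℤ) : ℝ) ^ α :=
              le_mul_of_one_le_right (le_trans zero_le_one (hfac1 h j hjmem)) hprod1
          _ = ∏ i ∈ supp h, ((|h i| : ℤ) : ℝ) ^ α :=
              Finset.mul_prod_erase (supp h) (fun i => ((|h i| : ℤ) : ℝ) ^ α) hjmem
          _ ≤ (γ (supp h))⁻¹ * ∏ i ∈ supp h, ((|h i| : ℤ) : ℝ) ^ α := by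
              nlinarith [Finset.prod_nonneg (fun i (hi : i ∈ supp h) =>
                (le_trans zero_le_one (hfac1 h i hi)))]
      have hxM : ((|h j| : ℤ) : ℝ) ^ α ≤ M := le_trans hple hh
      have hxpos : (0:ℝ) < ((|h j| : ℤ) : ℝ) := by
        exact_mod_cast abs_pos.2 h0
      have hle : ((|h j| : ℤ) : ℝ) ≤ M ^ (1/α) := by
        rw [one_div]
        exact (Real.le_rpow_inv_iff_of_pos hxpos.le hM.le hα0).2 hxM
      have : ((|h j| : ℤ) : ℝ) ≤ (N:ℝ) := le_trans hle (Nat.le_ceil _)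
      exact hTmem _ (by exact_mod_cast this)
  set B : Finset (Fin d → ℤ) := Fintype.piFinset (fun _ : Fin d => T) with hBdef
  set S : Finset (Fin d → ℤ) := B.filter fun h => r h ≤ M with hSdef
  have hset : {h : Fin d → ℤ | r h ≤ M} = (↑S : Set (Fin d → ℤ)) := by
    ext h
    simp only [Set.mem_setOf_eq, Finset.mem_coe, hSdef, Finset.mem_filter]
    constructor
    · intro hh
      exact ⟨Fintype.mem_piFinset.2 fun j => hbox h hh j, hh⟩
    · exact fun hh => hh.2
  -- the weight function f
  set f : (Fin d → ℤ) → ℝ := fun h => γ (supp h) ^ (1/lam) * ∏ j ∈ supp h, w (h j)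
    with hfdef
  have hf0 : ∀ h, 0 ≤ f h := fun h =>
    mul_nonneg (Real.rpow_nonneg (hγ _).1.le _) (Finset.prod_nonneg fun j _ => hw0 _)
  have hfeq : ∀ h, (r h) ^ (-(1/lam)) = f h := by
    intro h
    rw [hr]
    have hγpos := (hγ (Finset.univ.filter fun j => h j ≠ 0)).1
    have hprodnn : (0:ℝ) ≤ ∏ j ∈ Finset.univ.filter (fun j => h j ≠ 0),
        ((|h j| : ℤ) : ℝ) ^ α :=
      Finset.prod_nonneg fun j _ => Real.rpow_nonneg (by positivity) _
    rw [Real.mul_rpow (inv_nonneg.2 hγpos.le) hprodnn]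
    rw [← Real.finset_prod_rpow _ _ (fun j _ => Real.rpow_nonneg (by positivity) _) _]
    simp only [hfdef, hsuppdef]
    congr 1
    · rw [Real.inv_rpow hγpos.le, ← Real.rpow_neg hγpos.le, neg_neg]
    · refine Finset.prod_congr rfl fun j hj => ?_
      rw [← Real.rpow_mul (by positivity : (0:ℝ) ≤ ((|h j| : ℤ) : ℝ))]
      simp only [w]
      congr 1
      rw [hβdef]
      ring
  have hkey : ∀ h : Fin d → ℤ, r h ≤ M → (1:ℝ) ≤ M ^ (1/lam) * f h := by
    intro h hh
    have h1 : (r h) ^ (1/lam) ≤ M ^ (1/lam) :=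
      Real.rpow_le_rpow (hrpos h).le hh hexp0
    have h2 : (0:ℝ) < (r h) ^ (-(1/lam)) := Real.rpow_pos_of_pos (hrpos h) _
    have h3 : (1:ℝ) = (r h) ^ (1/lam) * (r h) ^ (-(1/lam)) := by
      rw [← Real.rpow_add (hrpos h)]
      simp
    calc (1:ℝ) = (r h) ^ (1/lam) * (r h) ^ (-(1/lam)) := h3
      _ ≤ M ^ (1/lam) * (r h) ^ (-(1/lam)) := mul_le_mul_of_nonneg_right h1 h2.le
      _ = M ^ (1/lam) * f h := by rw [hfeq]
  -- counting
  have hMexp0 : (0:ℝ) ≤ M ^ (1/lam) := Real.rpow_nonneg hM.le _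
  have hcard : (S.card : ℝ) ≤ M ^ (1/lam) * ∑ h ∈ B, f h := by
    calc (S.card : ℝ) = ∑ h ∈ S, (1:ℝ) := by simp
      _ ≤ ∑ h ∈ S, M ^ (1/lam) * f h :=
          Finset.sum_le_sum fun h hh => hkey h (Finset.mem_filter.1 hh).2
      _ ≤ ∑ h ∈ B, M ^ (1/lam) * f h :=
          Finset.sum_le_sum_of_subset_of_nonneg (Finset.filter_subset _ _)
            (fun h _ _ => mul_nonneg hMexp0 (hf0 h))
      _ = M ^ (1/lam) * ∑ h ∈ B, f h := by rw [Finset.mul_sum]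
  -- factorization over supports
  have hfiber : ∀ u : Finset (Fin d),
      ∑ h ∈ B.filter (fun h => supp h = u), f h ≤
        γ u ^ (1/lam) * (∑ n ∈ T, w n) ^ u.card := by
    intro u
    have e1 : ∑ h ∈ B.filter (fun h => supp h = u), f h =
        γ u ^ (1/lam) * ∑ h ∈ B.filter (fun h => supp h = u), ∏ j ∈ u, w (h j) := by
      rw [Finset.mul_sum]
      refine Finset.sum_congr rfl fun h hh => ?_
      have hu : supp h = u := (Finset.mem_filter.1 hh).2
      simp only [hfdef, hu]
    rw [e1]
    refine mul_le_mul_of_nonneg_left ?_ (Real.rpow_nonneg (hγ _).1.le _)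
    set Wf : Fin d → ℤ → ℝ := fun j n => if j ∈ u then w n else (if n = 0 then 1 else 0)
      with hWfdef
    have hWf0 : ∀ j n, 0 ≤ Wf j n := by
      intro j n
      simp only [Wf]
      split
      · exact hw0 n
      · split <;> norm_num
    calc ∑ h ∈ B.filter (fun h => supp h = u), ∏ j ∈ u, w (h j)
        = ∑ h ∈ B.filter (fun h => supp h = u), ∏ j, Wf j (h j) := by
          refine Finset.sum_congr rfl fun h hh => ?_
          have hu : supp h = u := (Finset.mem_filter.1 hh).2
          rw [← Finset.prod_mul_prod_compl u (fun j => Wf j (h j))]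
          have e2 : ∏ j ∈ u, Wf j (h j) = ∏ j ∈ u, w (h j) :=
            Finset.prod_congr rfl fun j hj => by simp [Wf, hj]
          have e3 : ∏ j ∈ uᶜ, Wf j (h j) = 1 := by
            refine Finset.prod_eq_one fun j hj => ?_
            have hju : j ∉ u := Finset.mem_compl.1 hj
            have hj0 : h j = 0 := by
              by_contra hc
              exact hju (hu ▸ (by simp [supp, hc] : j ∈ supp h))
            simp [Wf, hju, hj0]
          rw [e2, e3, mul_one]
      _ ≤ ∑ h ∈ B, ∏ j, Wf j (h j) :=
          Finset.sum_le_sum_of_subset_of_nonneg (Finset.filter_subset _ _)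
            (fun h _ _ => Finset.prod_nonneg fun j _ => hWf0 j _)
      _ = ∏ j, ∑ n ∈ T, Wf j n := (Finset.prod_univ_sum _ _).symm
      _ = (∑ n ∈ T, w n) ^ u.card := by
          have e4 : ∀ j : Fin d, ∑ n ∈ T, Wf j n =
              if j ∈ u then (∑ n ∈ T, w n) else 1 := by
            intro j
            by_cases hj : j ∈ u
            · simp [Wf, hj]
            · simp only [Wf, hj, if_false]
              rw [Finset.sum_ite_eq' T 0 (fun _ => (1:ℝ))]
              simp [h0T]
          calc ∏ j, ∑ n ∈ T, Wf j n
              = ∏ j, (if j ∈ u then (∑ n ∈ T, w n) else 1) :=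
                Finset.prod_congr rfl fun j _ => e4 j
            _ = (∑ n ∈ T, w n) ^ u.card := by
                rw [Finset.prod_ite_mem Finset.univ u (fun _ => ∑ n ∈ T, w n)]
                rw [Finset.univ_inter, Finset.prod_const]
  have hBsum : ∑ h ∈ B, f h ≤
      ∑ u : Finset (Fin d), γ u ^ (1/lam) * (2 * Z) ^ u.card := by
    rw [← Finset.sum_fiberwise B supp f]
    refine Finset.sum_le_sum fun u _ => le_trans (hfiber u) ?_
    exact mul_le_mul_of_nonneg_left
      (pow_le_pow_left₀ hST0 hTsum _) (Real.rpow_nonneg (hγ _).1.le _)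
  -- conclude
  have hcount : (Nat.card {h : Fin d → ℤ | r h ≤ M} : ℝ) = (S.card : ℝ) := by
    rw [Nat.card_coe_set_eq, hset, Set.ncard_coe_finset]
  rw [hcount]
  calc (S.card : ℝ) ≤ M ^ (1/lam) * ∑ h ∈ B, f h := hcard
    _ ≤ M ^ (1/lam) * ∑ u : Finset (Fin d), γ u ^ (1/lam) * (2 * Z) ^ u.card :=
        mul_le_mul_of_nonneg_left hBsum hMexp0
end

section
/- Let α > 1/2 and 1/2 < λ < α, with r_{α,γ} as in the weighted Korobov space and μ(λ) := ∑_{u⊆{1,…,d}} γ_u^{1/λ} (2ζ(α/λ))^{|u|}. Then for every M > 0, ∑_{h ∈ ℤ^d : r_{α,γ}(h) > M} r_{α,γ}(h)^{-2} ≤ M^{1/λ - 2} · μ(λ). -/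
/-- One-dimensional tail fact: any finite sum of `|m|^(-s)` over `ℤ` is at most
`2 ζ(s) = 2 ∑_{n≥0} (n+1)^(-s)`. -/
lemma onedim_sum_le (s : ℝ) (hs : 1 < s) (t : Finset ℤ) :
    ∑ m ∈ t, |(m : ℝ)| ^ (-s) ≤ 2 * ∑' n : ℕ, ((n : ℝ) + 1) ^ (-s) := by
  have hsne : -s ≠ 0 := by intro h; nlinarith [neg_eq_zero.mp h]
  have hsum : Summable (fun n : ℕ => ((n : ℝ) + 1) ^ (-s)) := by
    have h0 : Summable (fun n : ℕ => (n : ℝ) ^ (-s)) :=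
      Real.summable_nat_rpow.2 (by linarith)
    have h1 := (summable_nat_add_iff (f := fun n : ℕ => (n : ℝ) ^ (-s)) 1).2 h0
    refine h1.congr fun n => ?_
    push_cast
    ring_nf
  set ζ := ∑' n : ℕ, ((n : ℝ) + 1) ^ (-s) with hζdef
  have hζ : HasSum (fun n : ℕ => ((n : ℝ) + 1) ^ (-s)) ζ := hsum.hasSum
  set g : ℤ → ℝ := fun m => |(m : ℝ)| ^ (-s) with hg
  have h1 : HasSum (fun n : ℕ => g (↑(n + 1))) ζ := by
    have he : (fun n : ℕ => g (↑(n + 1))) = fun n : ℕ => ((n : ℝ) + 1) ^ (-s) := by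
      funext n
      simp only [hg]
      push_cast
      rw [abs_of_nonneg (by positivity)]
    rw [he]; exact hζ
  have h2 : HasSum (fun n : ℕ => g (↑n)) ζ := by
    have := (hasSum_nat_add_iff (f := fun n : ℕ => g (↑n)) 1).1 h1
    simpa [hg, Real.zero_rpow hsne] using this
  have h3 : HasSum (fun n : ℕ => g (-(↑n + 1))) ζ := by
    have he : (fun n : ℕ => g (-(↑n + 1))) = fun n : ℕ => ((n : ℝ) + 1) ^ (-s) := by
      funext n
      simp only [hg]
      push_cast
      rw [abs_neg, abs_of_nonneg (by positivity)]
    rw [he]; exact hζ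
  have htot : HasSum g (ζ + ζ) := h2.of_nat_of_neg_add_one h3
  have hle : ∑ m ∈ t, g m ≤ ∑' m : ℤ, g m :=
    Summable.sum_le_tsum t (fun m _ => Real.rpow_nonneg (abs_nonneg _) _) htot.summable
  calc ∑ m ∈ t, g m ≤ ∑' m : ℤ, g m := hle
    _ = ζ + ζ := htot.tsum_eq
    _ = 2 * ζ := by ring

/-- Product bound: if `G : ℤ → ℝ` is nonnegative with all finite sums bounded by `Z`,
and all elements of `T` are supported in `u`, then the sum over `T` of products over `u`
is at most `Z ^ |u|`. -/
lemma prod_sum_le {d : ℕ} (G : ℤ → ℝ) (hGnn : ∀ m, 0 ≤ G m) (Z : ℝ)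
    (hZ : ∀ t : Finset ℤ, ∑ m ∈ t, G m ≤ Z)
    (u : Finset (Fin d)) :
    ∀ T : Finset (Fin d → ℤ), (∀ h ∈ T, ∀ j, j ∉ u → h j = 0) →
      ∑ h ∈ T, ∏ j ∈ u, G (h j) ≤ Z ^ u.card := by
  have hZnn : 0 ≤ Z := by simpa using hZ ∅
  induction u using Finset.cons_induction with
  | empty =>
    intro T hT
    have hcard : T.card ≤ 1 := by
      refine Finset.card_le_one.2 fun a ha b hb => ?_
      funext j
      rw [hT a ha j (Finset.notMem_empty j), hT b hb j (Finset.notMem_empty j)]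
    calc ∑ h ∈ T, ∏ j ∈ (∅ : Finset (Fin d)), G (h j)
        = (T.card : ℝ) := by simp
      _ ≤ 1 := by exact_mod_cast hcard
      _ = Z ^ (∅ : Finset (Fin d)).card := by simp
  | cons j₀ u' hj₀ ih =>
    intro T hT
    set e : (Fin d → ℤ) → ℤ × (Fin d → ℤ) :=
      fun h => (h j₀, Function.update h j₀ 0) with he
    have einj : Function.Injective e := by
      intro a b hab
      have h1 : a j₀ = b j₀ := congrArg Prod.fst hab
      have h2 : Function.update a j₀ 0 = Function.update b j₀ 0 := congrArg Prod.snd hab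
      funext j
      by_cases hj : j = j₀
      · rw [hj]; exact h1
      · have := congrFun h2 j
        rwa [Function.update_of_ne hj, Function.update_of_ne hj] at this
    have key : ∀ h ∈ T,
        ∏ j ∈ Finset.cons j₀ u' hj₀, G (h j)
          = G ((e h).1) * ∏ j ∈ u', G ((e h).2 j) := by
      intro h _
      rw [Finset.prod_cons]
      congr 1
      refine Finset.prod_congr rfl fun j hj => ?_
      rw [he]
      simp only
      rw [Function.update_of_ne (ne_of_mem_of_not_mem hj hj₀)]
    calc ∑ h ∈ T, ∏ j ∈ Finset.cons j₀ u' hj₀, G (h j)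
        = ∑ h ∈ T, G ((e h).1) * ∏ j ∈ u', G ((e h).2 j) := Finset.sum_congr rfl key
      _ = ∑ p ∈ T.image e, G p.1 * ∏ j ∈ u', G (p.2 j) := by
          rw [Finset.sum_image (fun a _ b _ hab => einj hab)]
      _ ≤ ∑ p ∈ (T.image (fun h => h j₀)) ×ˢ (T.image (fun h => Function.update h j₀ 0)),
            G p.1 * ∏ j ∈ u', G (p.2 j) := by
          refine Finset.sum_le_sum_of_subset_of_nonneg ?_ fun p _ _ =>
            mul_nonneg (hGnn _) (Finset.prod_nonneg fun j _ => hGnn _)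
          intro p hp
          obtain ⟨h, hh, rfl⟩ := Finset.mem_image.1 hp
          exact Finset.mem_product.2
            ⟨Finset.mem_image_of_mem _ hh, Finset.mem_image_of_mem _ hh⟩
      _ = (∑ a ∈ T.image (fun h => h j₀), G a) *
            ∑ k ∈ T.image (fun h => Function.update h j₀ 0), ∏ j ∈ u', G (k j) := by
          rw [Finset.sum_product, Finset.sum_mul_sum]
      _ ≤ Z * Z ^ u'.card := by
          refine mul_le_mul (hZ _) (ih _ ?_) ?_ hZnn
          · intro k hk j hj
            obtain ⟨h, hh, rfl⟩ := Finset.mem_image.1 hk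
            by_cases hjj : j = j₀
            · rw [hjj, Function.update_self]
            · rw [Function.update_of_ne hjj]
              exact hT h hh j (by simp [Finset.mem_cons, hjj, hj])
          · exact Finset.sum_nonneg fun k _ =>
              Finset.prod_nonneg fun j _ => hGnn _
      _ = Z ^ (Finset.cons j₀ u' hj₀).card := by
          rw [Finset.card_cons, pow_succ, mul_comm]

/-- Tail bound for the weighted Korobov sequence:
`∑_{r_{α,γ}(h) > M} r_{α,γ}(h)^{-2} ≤ M^{1/λ - 2} μ(λ)` where
`μ(λ) = ∑_{u ⊆ {1,…,d}} γ_u^{1/λ} (2 ζ(α/λ))^{|u|}`. -/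
theorem weighted_tail_bound (d : ℕ) (α lam : ℝ)
    (hα : 1 / 2 < α) (hlam1 : 1 / 2 < lam) (hlam2 : lam < α)
    (γ : Finset (Fin d) → ℝ) (hγ : ∀ u, 0 < γ u ∧ γ u ≤ 1)
    (r : (Fin d → ℤ) → ℝ)
    (hr : ∀ h : Fin d → ℤ,
      r h = (γ (Finset.univ.filter fun j => h j ≠ 0))⁻¹ *
        ∏ j ∈ Finset.univ.filter (fun j => h j ≠ 0), ((|h j| : ℤ) : ℝ) ^ α)
    (M : ℝ) (hM : 0 < M) :
    (∑' h : {h : Fin d → ℤ // M < r h}, (r (h : Fin d → ℤ)) ^ (-2 : ℝ))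
      ≤ M ^ (1 / lam - 2) * ∑ u : Finset (Fin d),
          γ u ^ (1 / lam) * (2 * ∑' m : ℕ, ((m : ℝ) + 1) ^ (-(α / lam))) ^ u.card := by
  have hlam0 : 0 < lam := by linarith
  have hα0 : 0 < α := by linarith
  have hs : 1 < α / lam := (one_lt_div hlam0).2 hlam2
  set Z : ℝ := 2 * ∑' m : ℕ, ((m : ℝ) + 1) ^ (-(α / lam)) with hZdef
  set G : ℤ → ℝ := fun m => ((|m| : ℤ) : ℝ) ^ (-(α / lam)) with hGdef
  have hGnn : ∀ m, 0 ≤ G m := fun m => Real.rpow_nonneg (by positivity) _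
  have hZ' : ∀ t : Finset ℤ, ∑ m ∈ t, G m ≤ Z := by
    intro t
    have := onedim_sum_le (α / lam) hs t
    simpa [hGdef, Int.cast_abs] using this
  have hZnn : 0 ≤ Z := by simpa using hZ' ∅
  have hrpos : ∀ h : Fin d → ℤ, 0 < r h := by
    intro h
    rw [hr h]
    refine mul_pos (inv_pos.2 (hγ _).1) (Finset.prod_pos fun j hj => ?_)
    have hne : h j ≠ 0 := (Finset.mem_filter.1 hj).2
    exact Real.rpow_pos_of_pos (by exact_mod_cast abs_pos.2 hne) _
  have hkey : ∀ h : Fin d → ℤ, r h ^ (-(1 / lam)) =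
      γ (Finset.univ.filter fun j => h j ≠ 0) ^ (1 / lam) *
        ∏ j ∈ Finset.univ.filter (fun j => h j ≠ 0), G (h j) := by
    intro h
    have hγu := (hγ (Finset.univ.filter fun j => h j ≠ 0)).1
    have hprod_nn : ∀ j ∈ Finset.univ.filter (fun j : Fin d => h j ≠ 0),
        (0 : ℝ) ≤ ((|h j| : ℤ) : ℝ) ^ α := fun j _ => Real.rpow_nonneg (by positivity) _
    rw [hr h, Real.mul_rpow (inv_nonneg.2 hγu.le) (Finset.prod_nonneg hprod_nn)]
    congr 1
    · rw [Real.inv_rpow hγu.le, Real.rpow_neg hγu.le, inv_inv]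
    · rw [← Real.finset_prod_rpow _ _ hprod_nn]
      refine Finset.prod_congr rfl fun j hj => ?_
      rw [hGdef]
      simp only
      rw [← Real.rpow_mul (by positivity)]
      congr 1
      field_simp
  set μ : ℝ := ∑ u : Finset (Fin d), γ u ^ (1 / lam) * Z ^ u.card with hμdef
  have hμnn : 0 ≤ μ := Finset.sum_nonneg fun u _ =>
    mul_nonneg (Real.rpow_nonneg (hγ u).1.le _) (pow_nonneg hZnn _)
  have hmain : ∀ T : Finset (Fin d → ℤ), ∑ h ∈ T, r h ^ (-(1 / lam)) ≤ μ := by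
    intro T
    calc ∑ h ∈ T, r h ^ (-(1 / lam))
        = ∑ u : Finset (Fin d), ∑ h ∈ T.filter
            (fun h => (Finset.univ.filter fun j => h j ≠ 0) = u), r h ^ (-(1 / lam)) :=
          (Finset.sum_fiberwise T _ _).symm
      _ ≤ μ := by
          rw [hμdef]
          refine Finset.sum_le_sum fun u _ => ?_
          have hcongr : ∀ h ∈ T.filter
              (fun h => (Finset.univ.filter fun j => h j ≠ 0) = u),
              r h ^ (-(1 / lam)) = γ u ^ (1 / lam) * ∏ j ∈ u, G (h j) := by
            intro h hh
            have hu := (Finset.mem_filter.1 hh).2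
            rw [hkey h, hu]
          rw [Finset.sum_congr rfl hcongr, ← Finset.mul_sum]
          refine mul_le_mul_of_nonneg_left ?_ (Real.rpow_nonneg (hγ u).1.le _)
          refine prod_sum_le G hGnn Z hZ' u _ ?_
          intro h hh j hj
          have hu := (Finset.mem_filter.1 hh).2
          rw [← hu] at hj
          simpa using hj
  have hexp : 1 / lam - 2 ≤ 0 := by
    have h2 : 1 / lam < 2 := by
      rw [div_lt_iff₀ hlam0]; linarith
    linarith
  have hMe : 0 ≤ M ^ (1 / lam - 2) := Real.rpow_nonneg hM.le _
  refine tsum_le_of_sum_le' (mul_nonneg hMe hμnn) fun S => ?_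
  calc ∑ x ∈ S, r (x : Fin d → ℤ) ^ (-2 : ℝ)
      ≤ ∑ x ∈ S, M ^ (1 / lam - 2) * r (x : Fin d → ℤ) ^ (-(1 / lam)) := by
        refine Finset.sum_le_sum fun x _ => ?_
        have h1 : r (x : Fin d → ℤ) ^ (-2 : ℝ)
            = r (x : Fin d → ℤ) ^ (1 / lam - 2) * r (x : Fin d → ℤ) ^ (-(1 / lam)) := by
          rw [← Real.rpow_add (hrpos _)]
          congr 1
          ring
        rw [h1]
        exact mul_le_mul_of_nonneg_right
          (Real.rpow_le_rpow_of_nonpos hM x.2.le hexp)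
          (Real.rpow_nonneg (hrpos _).le _)
    _ = M ^ (1 / lam - 2) * ∑ x ∈ S, r (x : Fin d → ℤ) ^ (-(1 / lam)) :=
        (Finset.mul_sum _ _ _).symm
    _ = M ^ (1 / lam - 2) * ∑ h ∈ S.image Subtype.val, r h ^ (-(1 / lam)) := by
        rw [Finset.sum_image fun a _ b _ hab => Subtype.ext hab]
    _ ≤ M ^ (1 / lam - 2) * μ := mul_le_mul_of_nonneg_left (hmain _) hMe
end
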